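/- For every nonzero integer a and every n ≥ 0, the higher-order Bernoulli-type polynomials satisfy Σ_{k=l}^{m} k·a_k · B_{n,a+1}^q(x+k) = (1 − n/a) · B_{n,a}^q(x) + (n·x/a) · B_{n-1,a}^q(x). -/

import Mathlib

open PowerSeries

theorem dJ_aux (J : ℤ → PowerSeries ℚ) (hJ0 : J 0 = 1)
    (hJadd : ∀ a b : ℤ, J (a + b) = J a * J b) (a : ℤ) :
    PowerSeries.derivative ℚ (J a)
      = PowerSeries.C (a : ℚ) * (J (a - 1) * PowerSeries.derivative ℚ (J 1)) := by
  have leib : ∀ f g : PowerSeries ℚ, PowerSeries.derivative ℚ (f * g)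
      = f * PowerSeries.derivative ℚ g + g * PowerSeries.derivative ℚ f := by
    intro f g; simpa [smul_eq_mul] using (PowerSeries.derivative ℚ).leibniz f g
  set D := PowerSeries.derivative ℚ
  induction a using Int.induction_on with
  | zero => simp [hJ0]
  | succ i ih =>
      have h1 : J ((i:ℤ) + 1) = J i * J 1 := hJadd i 1
      have h2 : J 1 * J ((i:ℤ) - 1) = J (i:ℤ) := by
        rw [← hJadd]; norm_num
      have e2 : D (J ((i:ℤ)+1)) = J i * D (J 1) + J 1 * D (J i) := by
        rw [h1]; exact leib _ _
      have hC : PowerSeries.C (((i:ℤ)+1 : ℤ) : ℚ) = PowerSeries.C ((i:ℤ) : ℚ) + 1 := by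
        push_cast; rw [map_add, map_one]
      have h3 : ((i:ℤ)+1-1) = (i:ℤ) := by ring
      rw [e2, ih, hC, h3]
      push_cast
      linear_combination (PowerSeries.C (i:ℚ) * D (J 1)) * h2
  | pred i ih =>
      have h1 : J (-(i:ℤ)) = J (-(i:ℤ)-1) * J 1 := by
        rw [← hJadd]; norm_num
      have u : J 1 * J (-1) = 1 := by rw [← hJadd]; norm_num [hJ0]
      have e3 : J (-1) * J (-(i:ℤ)-1) = J (-(i:ℤ)-1-1) := by
        rw [← hJadd]; ring_nf
      have e2 : D (J (-(i:ℤ))) = J (-(i:ℤ)-1) * D (J 1) + J 1 * D (J (-(i:ℤ)-1)) := by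
        rw [h1]; exact leib _ _
      have hC : PowerSeries.C ((-(i:ℤ)-1 : ℤ) : ℚ)
          = PowerSeries.C ((-(i:ℤ) : ℤ) : ℚ) - 1 := by
        push_cast; rw [map_sub, map_one]
      rw [hC]
      linear_combination (J (-1:ℤ)) * ih - (J (-1:ℤ)) * e2 - (D (J (-(i:ℤ)-1))) * u
        - ((1 - PowerSeries.C ((-(i:ℤ):ℤ) : ℚ)) * D (J 1)) * e3

theorem E_eq_aux :
    (PowerSeries.mk fun n => ((n.factorial : ℚ)⁻¹) • (Polynomial.X : Polynomial ℚ) ^ n)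
      = rescale (Polynomial.X : Polynomial ℚ) (exp (Polynomial ℚ)) := by
  ext n
  rw [PowerSeries.coeff_mk, coeff_rescale, coeff_exp, Polynomial.algebraMap_eq,
    Polynomial.smul_eq_C_mul, one_div, mul_comm]

theorem map_rescale_exp_aux (f : Polynomial ℚ →ₐ[ℚ] Polynomial ℚ) (p : Polynomial ℚ) :
    PowerSeries.map (f : Polynomial ℚ →+* Polynomial ℚ) (rescale p (exp (Polynomial ℚ)))
      = rescale (f p) (exp (Polynomial ℚ)) := by
  ext n
  simp only [coeff_map, coeff_rescale, coeff_exp, map_mul, map_pow]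
  rw [show (f : Polynomial ℚ →+* Polynomial ℚ) ((algebraMap ℚ (Polynomial ℚ))
    (1 / (n.factorial : ℚ))) = algebraMap ℚ (Polynomial ℚ) (1 / (n.factorial : ℚ))
    from f.commutes _]
  rfl

theorem mapC_rescale_exp_aux (k : ℚ) :
    PowerSeries.map (Polynomial.C : ℚ →+* Polynomial ℚ) (rescale k (exp ℚ))
      = rescale (Polynomial.C k) (exp (Polynomial ℚ)) := by
  ext n
  simp only [coeff_map, coeff_rescale, coeff_exp, map_mul, map_pow]
  norm_num [Polynomial.algebraMap_eq, Algebra.algebraMap_self]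


theorem mulC_aux (p : Polynomial ℚ) (r : ℚ) : p * Polynomial.C r = r • p := by
  rw [Polynomial.smul_eq_C_mul]; ring

theorem factorial_inv_succ_aux (j : ℕ) :
    (((j+1).factorial : ℚ))⁻¹ * ((j:ℚ)+1) = ((j.factorial : ℚ))⁻¹ := by
  rw [Nat.factorial_succ]
  push_cast
  rw [mul_inv]
  have h1 : ((j:ℚ)+1) ≠ 0 := by positivity
  have h2 : (j.factorial : ℚ) ≠ 0 := by exact_mod_cast j.factorial_ne_zero
  field_simp

theorem cast_succ_aux (j : ℕ) :
    ((j : Polynomial ℚ) + 1) = Polynomial.C ((j:ℚ)+1) := by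
  rw [map_add, map_one, Polynomial.C_eq_natCast]

theorem bernoulli_type_order_raising
    (l m : ℤ) (hlm : l < m) (c : ℤ → ℚ)
    (hc0 : ∑ k ∈ Finset.Icc l m, c k = 0)
    (hc1 : ∑ k ∈ Finset.Icc l m, (k : ℚ) * c k = 1)
    -- `J a = (t/Δ_q(t))^a`, where the indicator `Δ_q(t)` has coefficients
    -- `(∑_k c_k kⁿ)/n!`:
    (J : ℤ → PowerSeries ℚ)
    (hJ0 : J 0 = 1)
    (hJadd : ∀ a b : ℤ, J (a + b) = J a * J b)
    (hJ1 : J 1 * (PowerSeries.mk fun n =>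
        (∑ k ∈ Finset.Icc l m, c k * (k : ℚ) ^ n) / (n.factorial : ℚ)) = PowerSeries.X)
    -- the higher-order Bernoulli-type polynomials `B a n = B_{n,a}^q`:
    (B : ℤ → ℕ → Polynomial ℚ)
    (hB : ∀ a : ℤ,
      (PowerSeries.map (Polynomial.C : ℚ →+* Polynomial ℚ) (J a)) *
        (PowerSeries.mk fun n => ((n.factorial : ℚ)⁻¹) • (Polynomial.X : Polynomial ℚ) ^ n) =
      PowerSeries.mk fun n => ((n.factorial : ℚ)⁻¹) • B a n)
    (a : ℤ) (ha : a ≠ 0) (n : ℕ) :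
    ∑ k ∈ Finset.Icc l m,
        ((k : ℚ) * c k) • (B (a + 1) n).comp (Polynomial.X + Polynomial.C (k : ℚ)) =
      (1 - (n : ℚ) / (a : ℚ)) • B a n +
        ((n : ℚ) / (a : ℚ)) • (Polynomial.X * B a (n - 1)) := by
  classical
  set Δ : PowerSeries ℚ := PowerSeries.mk fun n =>
      (∑ k ∈ Finset.Icc l m, c k * (k : ℚ) ^ n) / (n.factorial : ℚ) with hΔdef
  set D := PowerSeries.derivative ℚ with hD
  set Dp := PowerSeries.derivative (Polynomial ℚ) with hDp
  set M : PowerSeries ℚ →+* PowerSeries (Polynomial ℚ)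
    := PowerSeries.map (Polynomial.C : ℚ →+* Polynomial ℚ) with hM
  set E : PowerSeries (Polynomial ℚ)
    := PowerSeries.mk fun n => ((n.factorial : ℚ)⁻¹) • (Polynomial.X : Polynomial ℚ) ^ n with hE
  -- the commutative leibniz rules
  have leib : ∀ f g : PowerSeries ℚ, D (f * g) = f * D g + g * D f := by
    intro f g; simpa [smul_eq_mul] using (PowerSeries.derivative ℚ).leibniz f g
  have pleib : ∀ f g : PowerSeries (Polynomial ℚ), Dp (f * g) = f * Dp g + g * Dp f := by
    intro f g; simpa [smul_eq_mul] using (PowerSeries.derivative (Polynomial ℚ)).leibniz f g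
  -- (1/a) • D (J a) = J (a-1) * D (J 1)
  have hdJa : (a:ℚ)⁻¹ • D (J a) = J (a - 1) * D (J 1) := by
    rw [hD, dJ_aux J hJ0 hJadd a, smul_eq_C_mul, ← mul_assoc, ← map_mul,
      inv_mul_cancel₀ (by exact_mod_cast ha), map_one, one_mul]
  -- key power-series identity over ℚ
  have key : J (a + 1) * D Δ = J a - PowerSeries.X * (J (a - 1) * D (J 1)) := by
    have hleib1 : J 1 * D Δ + Δ * D (J 1) = 1 := by
      have := leib (J 1) Δ
      rw [hJ1] at this
      rw [← this, hD, PowerSeries.derivative_X]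
    have hJa1 : J (a + 1) = J a * J 1 := hJadd a 1
    have hJaΔ : J a * Δ = PowerSeries.X * J (a - 1) := by
      have h4 : J a = J 1 * J (a - 1) := by rw [← hJadd]; ring_nf
      rw [h4, mul_assoc, mul_comm (J (a-1)) Δ, ← mul_assoc, hJ1]
    linear_combination (D Δ) * hJa1 + (J a) * hleib1 - (D (J 1)) * hJaΔ
  -- M commutes with derivatives and smul
  have hMD : ∀ f : PowerSeries ℚ, Dp (M f) = M (D f) := by
    intro f; ext j
    simp [hDp, hD, hM, PowerSeries.coeff_derivative, PowerSeries.coeff_map]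
  have hMsmul : ∀ (r : ℚ) (f : PowerSeries ℚ), M (r • f) = r • M f := by
    intro r f; ext j
    simp [hM, PowerSeries.coeff_map, PowerSeries.coeff_smul, Polynomial.smul_eq_C_mul]
  -- Dp E = C X * E
  have hDpE : Dp E = PowerSeries.C Polynomial.X * E := by
    refine PowerSeries.ext fun j => ?_
    rw [hDp, PowerSeries.coeff_derivative, hE, PowerSeries.coeff_mk, PowerSeries.coeff_C_mul,
      PowerSeries.coeff_mk, cast_succ_aux, mulC_aux, smul_smul,
      mul_comm ((j:ℚ)+1) _, factorial_inv_succ_aux, pow_succ', mul_smul_comm]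
  -- per-k shift identity
  have hshift : ∀ k : ℤ,
      (PowerSeries.mk fun j => ((j.factorial : ℚ)⁻¹) •
          (B (a + 1) j).comp (Polynomial.X + Polynomial.C (k:ℚ)))
        = M (J (a + 1) * rescale (k:ℚ) (exp ℚ)) * E := by
    intro k
    set f : Polynomial ℚ →ₐ[ℚ] Polynomial ℚ :=
      Polynomial.aeval (Polynomial.X + Polynomial.C (k:ℚ)) with hf
    have hfC : (f : Polynomial ℚ →+* Polynomial ℚ).comp Polynomial.C = Polynomial.C := by
      refine RingHom.ext fun r => ?_
      simp [hf, Polynomial.algebraMap_eq]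
    have hcomp : ∀ p : Polynomial ℚ, f p = p.comp (Polynomial.X + Polynomial.C (k:ℚ)) := by
      intro p
      rw [hf, Polynomial.aeval_def, Polynomial.comp, Polynomial.algebraMap_eq]
    have step := congrArg (PowerSeries.map (f : Polynomial ℚ →+* Polynomial ℚ)) (hB (a+1))
    have hrhs : PowerSeries.map (f : Polynomial ℚ →+* Polynomial ℚ)
        (PowerSeries.mk fun j => ((j.factorial : ℚ)⁻¹) • B (a+1) j)
        = PowerSeries.mk fun j => ((j.factorial : ℚ)⁻¹) •
            (B (a + 1) j).comp (Polynomial.X + Polynomial.C (k:ℚ)) := by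
      refine PowerSeries.ext fun j => ?_
      rw [PowerSeries.coeff_map, PowerSeries.coeff_mk, PowerSeries.coeff_mk]
      show f _ = _
      rw [map_smul, hcomp]
    have hlhs : PowerSeries.map (f : Polynomial ℚ →+* Polynomial ℚ) (M (J (a+1)) * E)
        = M (J (a+1)) * (E * M (rescale (k:ℚ) (exp ℚ))) := by
      rw [map_mul]
      congr 1
      · rw [hM, ← RingHom.comp_apply, ← PowerSeries.map_comp, hfC]
      · rw [hE, E_eq_aux, map_rescale_exp_aux]
        have hfX : f Polynomial.X = Polynomial.X + Polynomial.C (k:ℚ) := by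
          simp [hf]
        rw [hfX, ← exp_mul_exp_eq_exp_add, ← E_eq_aux, mapC_rescale_exp_aux]
    rw [← hrhs, ← step, hlhs, map_mul]
    ring
  -- the derivative of Δ as combination of exponentials
  have hDΔ : ∑ k ∈ Finset.Icc l m, ((k:ℚ) * c k) • rescale (k:ℚ) (exp ℚ) = D Δ := by
    ext j
    rw [map_sum, hD, PowerSeries.coeff_derivative, hΔdef, PowerSeries.coeff_mk]
    simp only [PowerSeries.coeff_smul, coeff_rescale, coeff_exp, Algebra.algebraMap_self,
      RingHom.id_apply, smul_eq_mul]
    rw [Finset.sum_div, Finset.sum_mul]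
    refine Finset.sum_congr rfl fun k _ => ?_
    have h1 : (j.factorial : ℚ) ≠ 0 := by exact_mod_cast j.factorial_ne_zero
    rw [Nat.factorial_succ]
    push_cast
    have h2 : ((j:ℚ)+1) ≠ 0 := by positivity
    field_simp
    ring
  -- left side series
  have hL : ∑ k ∈ Finset.Icc l m, ((k:ℚ) * c k) •
        (PowerSeries.mk fun j => ((j.factorial : ℚ)⁻¹) •
          (B (a + 1) j).comp (Polynomial.X + Polynomial.C (k:ℚ)))
      = M (J (a + 1) * D Δ) * E := by
    calc ∑ k ∈ Finset.Icc l m, ((k:ℚ) * c k) •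
            (PowerSeries.mk fun j => ((j.factorial : ℚ)⁻¹) •
              (B (a + 1) j).comp (Polynomial.X + Polynomial.C (k:ℚ)))
        = ∑ k ∈ Finset.Icc l m, ((k:ℚ) * c k) •
            (M (J (a + 1) * rescale (k:ℚ) (exp ℚ)) * E) :=
          Finset.sum_congr rfl fun k _ => by rw [hshift k]
      _ = (∑ k ∈ Finset.Icc l m, ((k:ℚ) * c k) •
            M (J (a + 1) * rescale (k:ℚ) (exp ℚ))) * E := by
          rw [Finset.sum_mul]
          exact Finset.sum_congr rfl fun k _ => (smul_mul_assoc _ _ _).symm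
      _ = M (∑ k ∈ Finset.Icc l m, ((k:ℚ) * c k) •
            (J (a + 1) * rescale (k:ℚ) (exp ℚ))) * E := by
          rw [map_sum]
          congr 1
          exact Finset.sum_congr rfl fun k _ => (hMsmul _ _).symm
      _ = M (J (a + 1) * D Δ) * E := by
          rw [← hDΔ, Finset.mul_sum]
          congr 2
          exact Finset.sum_congr rfl fun k _ => (mul_smul_comm _ _ _).symm
  -- right side series
  have hR : M (J (a + 1) * D Δ) * E
      = PowerSeries.mk fun j => ((j.factorial : ℚ)⁻¹) •
          ((1 - (j : ℚ) / (a : ℚ)) • B a j +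
            ((j : ℚ) / (a : ℚ)) • (Polynomial.X * B a (j - 1))) := by
    have hsmul' : ∀ (r : ℚ) (g : PowerSeries (Polynomial ℚ)),
        r • g = PowerSeries.C (Polynomial.C r) * g := by
      intro r g; ext j
      simp [Polynomial.smul_eq_C_mul]
    have hDF : Dp (M (J a) * E) = M (D (J a)) * E
        + PowerSeries.C Polynomial.X * (M (J a) * E) := by
      rw [pleib, hMD, hDpE]; ring
    have hmd : PowerSeries.C (Polynomial.C ((a:ℚ)⁻¹)) * M (D (J a))
        = M (J (a - 1)) * M (D (J 1)) := by
      rw [← hsmul', ← hMsmul, hdJa, map_mul]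
    have main : M (J (a + 1) * D Δ) * E
        = M (J a) * E - (a:ℚ)⁻¹ • (PowerSeries.X * Dp (M (J a) * E))
          + (a:ℚ)⁻¹ • (PowerSeries.C Polynomial.X *
              (PowerSeries.X * (M (J a) * E))) := by
      rw [key, hDF, hsmul', hsmul', map_sub, map_mul, map_mul, PowerSeries.map_X]
      linear_combination (PowerSeries.X * E) * hmd
    rw [main, hB a]
    refine PowerSeries.ext fun j => ?_
    rcases j with _ | j
    · simp
    · simp only [map_add, map_sub, PowerSeries.coeff_smul, PowerSeries.coeff_succ_X_mul,
        hDp, PowerSeries.coeff_derivative, PowerSeries.coeff_C_mul, PowerSeries.coeff_mk,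
        Nat.succ_sub_one]
      rw [cast_succ_aux, mulC_aux, mul_smul_comm]
      have ha' : (a:ℚ) ≠ 0 := by exact_mod_cast ha
      have hv := factorial_inv_succ_aux j
      have h2 : (j.factorial : ℚ) ≠ 0 := by exact_mod_cast j.factorial_ne_zero
      have h3 : ((j+1).factorial : ℚ) ≠ 0 := by exact_mod_cast (j+1).factorial_ne_zero
      match_scalars
      · ring
      · linear_combination -((a:ℚ)⁻¹) * hv
  -- conclude
  have hcoeff := congrArg (PowerSeries.coeff n) (hL.trans hR)
  rw [map_sum, PowerSeries.coeff_mk] at hcoeff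
  simp only [PowerSeries.coeff_smul, PowerSeries.coeff_mk] at hcoeff
  have hfac : ((n.factorial : ℚ)⁻¹) ≠ 0 := by
    simp [Nat.factorial_ne_zero]
  apply smul_right_injective (Polynomial ℚ) hfac
  show ((n.factorial : ℚ)⁻¹) • _ = ((n.factorial : ℚ)⁻¹) • _
  rw [Finset.smul_sum, ← hcoeff]
  exact Finset.sum_congr rfl fun k _ => smul_comm _ _ _
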